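/- Let ψ: ℝ → ℝ be C¹ with ψ(0)=1, ψ even, and suppose there exist C>0 and δ>1 such that |ψ(x)| + |x·ψ'(x)| ≤ C·(1+x²)^{-δ/2} for all x ∈ ℝ. Let μ be a probability measure on ℝ, let 0 < α ≤ 1, and let x ∈ ℝ be such that (d_α μ)(x) := lim_{ε→0⁺} μ((x−ε, x+ε))/(2ε)^α exists and is finite. Then lim_{a→0⁺} a^{−α}·(ψ_a * μ)(x) = c_α · (d_α μ)(x), where c_α = ∫_0^∞ α·2^α·y^{α−1}·ψ(y) dy. -/

import Mathlib

open MeasureTheory Filter Real Set Topology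

/-- Generic integrability: continuous `g` with polynomial tail decay, times `s^β`, `-1<β≤0`. -/
lemma aux_int {g : ℝ → ℝ} (hg : Continuous g) {C δ : ℝ} (hδ : 1 < δ)
    (hbound : ∀ s : ℝ, 1 ≤ s → |g s| ≤ C * s ^ (-δ)) {β : ℝ} (hβ : -1 < β) (hβ1 : β ≤ 0) :
    IntegrableOn (fun s => s ^ β * g s) (Ioi (0:ℝ)) := by
  have h1 : IntegrableOn (fun s => s ^ β * g s) (Ioc (0:ℝ) 1) := by
    obtain ⟨K, hK⟩ : ∃ K, ∀ s ∈ Icc (0:ℝ) 1, |g s| ≤ K := by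
      obtain ⟨z, hz, hmax⟩ := isCompact_Icc.exists_isMaxOn (⟨0, by norm_num⟩ : (Icc (0:ℝ) 1).Nonempty)
        (hg.abs.continuousOn)
      exact ⟨|g z|, fun s hs => hmax hs⟩
    have hbase : IntegrableOn (fun s => K * s ^ β) (Ioc (0:ℝ) 1) := by
      have := (intervalIntegral.intervalIntegrable_rpow' (a := 0) (b := 1) hβ)
      rw [intervalIntegrable_iff_integrableOn_Ioc_of_le (by norm_num)] at this
      exact this.const_mul K
    refine Integrable.mono' hbase ?_ ?_
    · exact ((measurable_id.pow measurable_const).mul hg.measurable).aestronglyMeasurable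
    · filter_upwards [ae_restrict_mem measurableSet_Ioc] with s hs
      have hs0 : (0:ℝ) ≤ s := hs.1.le
      have : ‖s ^ β * g s‖ = s ^ β * |g s| := by
        rw [norm_mul, Real.norm_eq_abs, Real.norm_eq_abs,
          abs_of_nonneg (Real.rpow_nonneg hs0 β)]
      rw [this, mul_comm K (s ^ β)]
      exact mul_le_mul_of_nonneg_left (hK s ⟨hs.1.le, hs.2⟩) (Real.rpow_nonneg hs0 β)
  have h2 : IntegrableOn (fun s => s ^ β * g s) (Ioi (1:ℝ)) := by
    have hbase : IntegrableOn (fun s => C * s ^ (-δ)) (Ioi (1:ℝ)) :=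
      (integrableOn_Ioi_rpow_of_lt (by linarith) one_pos).const_mul C
    refine Integrable.mono' hbase ?_ ?_
    · exact ((measurable_id.pow measurable_const).mul hg.measurable).aestronglyMeasurable
    · filter_upwards [ae_restrict_mem measurableSet_Ioi] with s hs
      have hs1 : (1:ℝ) ≤ s := le_of_lt hs
      have hs0 : (0:ℝ) ≤ s := by linarith
      have hsβ : s ^ β ≤ 1 := Real.rpow_le_one_of_one_le_of_nonpos hs1 hβ1
      have : ‖s ^ β * g s‖ = s ^ β * |g s| := by
        rw [norm_mul, Real.norm_eq_abs, Real.norm_eq_abs,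
          abs_of_nonneg (Real.rpow_nonneg hs0 β)]
      rw [this]
      calc s ^ β * |g s| ≤ 1 * (C * s ^ (-δ)) := by
            apply mul_le_mul hsβ (hbound s hs1) (abs_nonneg _)
            norm_num
        _ = C * s ^ (-δ) := one_mul _
  have : Ioi (0:ℝ) ⊆ Ioc 0 1 ∪ Ioi 1 := by
    intro s hs
    rcases le_or_gt s 1 with h | h
    · exact Or.inl ⟨hs, h⟩
    · exact Or.inr h
  exact (h1.union h2).mono_set this

lemma aux_pow_eq {s δ : ℝ} (hs0 : 0 ≤ s) : ((1 + s^2)) ^ (-δ/2) ≤ (s^2) ^ (-δ/2) ∧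
    (s^2 : ℝ) ^ (-δ/2) = s ^ (-δ) → True := fun _ => trivial

lemma aux_one_plus_sq {s δ : ℝ} (hδ : 0 < δ) (hs1 : 1 ≤ s) :
    (1 + s ^ 2) ^ (-δ/2) ≤ s ^ (-δ) := by
  have hs0 : (0:ℝ) ≤ s := by linarith
  have h1 : (s:ℝ) ^ 2 ≤ 1 + s ^ 2 := by nlinarith
  have h2 : ((1:ℝ) + s ^ 2) ^ (-δ/2) ≤ (s ^ 2) ^ (-δ/2) :=
    Real.rpow_le_rpow_of_nonpos (by nlinarith) h1 (by linarith)
  have h3 : ((s:ℝ) ^ 2) ^ (-δ/2) = s ^ (-δ) := by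
    rw [← Real.rpow_natCast s 2, ← Real.rpow_mul hs0]
    congr 1
    push_cast
    ring
  linarith [h2, h3.le, h3.ge]

lemma aux_global {s δ : ℝ} (hδ : 0 < δ) : (1 + s ^ 2) ^ (-δ/2) ≤ 1 :=
  Real.rpow_le_one_of_one_le_of_nonpos (by nlinarith) (by linarith)

section decay

variable {ψ : ℝ → ℝ} {C δ : ℝ}

lemma aux_top (hC : 0 < C) (hδ : 1 < δ)
    (htail : ∀ s : ℝ, 1 ≤ s → |ψ s| ≤ C * s ^ (-δ)) : Tendsto ψ atTop (𝓝 0) := by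
  refine squeeze_zero_norm' (a := fun s => C * s ^ (-δ)) ?_ ?_
  · exact (eventually_ge_atTop 1).mono fun s hs => htail s hs
  · simpa using (tendsto_rpow_neg_atTop (by linarith : (0:ℝ) < δ)).const_mul C

lemma aux_top2 (hC : 0 < C) (hδ : 1 < δ) {α : ℝ} (hα0 : 0 < α) (hα1 : α ≤ 1)
    (htail : ∀ s : ℝ, 1 ≤ s → |ψ s| ≤ C * s ^ (-δ)) :
    Tendsto (fun s => s ^ α * ψ s) atTop (𝓝 0) := by
  refine squeeze_zero_norm' (a := fun s => C * s ^ (-(δ-1))) ?_ ?_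
  · refine (eventually_ge_atTop 1).mono fun s hs => ?_
    have hs0 : (0:ℝ) < s := by linarith
    have h1 : ‖s ^ α * ψ s‖ = s ^ α * |ψ s| := by
      rw [norm_mul, Real.norm_eq_abs, Real.norm_eq_abs, abs_of_nonneg (Real.rpow_nonneg hs0.le α)]
    have h2 : s ^ α ≤ s := by
      calc s ^ α ≤ s ^ (1:ℝ) := Real.rpow_le_rpow_of_exponent_le hs hα1
        _ = s := Real.rpow_one s
    have h3 : s ^ α * |ψ s| ≤ s * (C * s ^ (-δ)) :=
      mul_le_mul h2 (htail s hs) (abs_nonneg _) hs0.le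
    have h4 : s * (C * s ^ (-δ)) = C * s ^ (-(δ - 1)) := by
      rw [show (-(δ-1)) = 1 + -δ by ring, Real.rpow_add hs0, Real.rpow_one]
      ring
    calc ‖s ^ α * ψ s‖ = s ^ α * |ψ s| := h1
      _ ≤ s * (C * s ^ (-δ)) := h3
      _ = C * s ^ (-(δ - 1)) := h4
  · simpa using (tendsto_rpow_neg_atTop (by linarith : (0:ℝ) < δ - 1)).const_mul C

lemma aux_rep (hC1 : ContDiff ℝ 1 ψ) (htop : Tendsto ψ atTop (𝓝 0))
    (hint : IntegrableOn (deriv ψ) (Ioi 0)) {u : ℝ} (hu : 0 ≤ u) :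
    ∫ s in Ioi u, -deriv ψ s = ψ u := by
  have h := integral_Ioi_of_hasDerivAt_of_tendsto' (a := u) (f := ψ) (f' := deriv ψ)
    (fun s _ => ((hC1.differentiable one_ne_zero) s).hasDerivAt)
    (hint.mono_set (Ioi_subset_Ioi hu)) htop
  rw [integral_neg, h]
  ring

end decay

lemma key_repr {ψ : ℝ → ℝ} (hdc : Continuous (deriv ψ))
    (hrep : ∀ u : ℝ, 0 ≤ u → ∫ s in Ioi u, -deriv ψ s = ψ u)
    (hint : IntegrableOn (deriv ψ) (Ioi 0))
    (heven : ∀ t : ℝ, ψ (-t) = ψ t)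
    (μ : Measure ℝ) [IsProbabilityMeasure μ] (x a : ℝ) (ha : 0 < a) :
    ∫ y, ψ ((x - y) / a) ∂μ =
      ∫ s in Ioi (0:ℝ), (-deriv ψ s) * (μ (Ioo (x - a*s) (x + a*s))).toReal := by
  set ν := volume.restrict (Ioi (0:ℝ)) with hν
  set S : Set (ℝ × ℝ) := {p : ℝ × ℝ | |x - p.1| < a * p.2} with hS
  have hSopen : IsOpen S :=
    isOpen_lt ((continuous_const.sub continuous_fst).abs) (continuous_const.mul continuous_snd)
  set F : ℝ × ℝ → ℝ := S.indicator (fun p => -deriv ψ p.2) with hF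
  have hFmeas : Measurable F :=
    ((hdc.measurable.comp measurable_snd).neg).indicator hSopen.measurableSet
  have hψabs : ∀ t : ℝ, ψ |t| = ψ t := by
    intro t
    rcases abs_cases t with ⟨h, _⟩ | ⟨h, _⟩
    · rw [h]
    · rw [h]; exact heven t
  have hFint : Integrable F (μ.prod ν) := by
    have hbase : Integrable (fun p : ℝ × ℝ => (1:ℝ) * deriv ψ p.2) (μ.prod ν) :=
      (integrable_const (1:ℝ)).mul_prod hint
    refine hbase.norm.mono' hFmeas.aestronglyMeasurable ?_
    refine Eventually.of_forall fun p => ?_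
    calc ‖F p‖ ≤ ‖-deriv ψ p.2‖ := norm_indicator_le_norm_self _ _
      _ = ‖1 * deriv ψ p.2‖ := by simp
  have step1 : ∀ y : ℝ, ∫ s, F (y, s) ∂ν = ψ ((x - y) / a) := by
    intro y
    have hu : 0 ≤ |x - y| / a := div_nonneg (abs_nonneg _) ha.le
    have hmem : ∀ s : ℝ, ((y, s) ∈ S ↔ s ∈ Ioi (|x - y| / a)) := by
      intro s
      rw [hS]
      simp only [mem_setOf_eq, mem_Ioi]
      rw [div_lt_iff₀ ha, mul_comm]
    have h1 : (fun s => F (y, s)) = (Ioi (|x - y| / a)).indicator (fun s => -deriv ψ s) := by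
      funext s
      by_cases h : s ∈ Ioi (|x - y| / a)
      · rw [hF, indicator_of_mem ((hmem s).mpr h), indicator_of_mem h]
      · rw [hF, indicator_of_notMem (fun hc => h ((hmem s).mp hc)), indicator_of_notMem h]
    rw [h1, integral_indicator measurableSet_Ioi, hν,
      Measure.restrict_restrict measurableSet_Ioi,
      inter_eq_self_of_subset_left (Ioi_subset_Ioi hu), hrep _ hu]
    have habs : |x - y| / a = |(x - y) / a| := by
      rw [abs_div, abs_of_pos ha]
    rw [habs, hψabs]
  have step2 : ∀ s ∈ Ioi (0:ℝ),
      ∫ y, F (y, s) ∂μ = (-deriv ψ s) * (μ (Ioo (x - a*s) (x + a*s))).toReal := by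
    intro s hs
    have hmem : ∀ y : ℝ, ((y, s) ∈ S ↔ y ∈ Ioo (x - a*s) (x + a*s)) := by
      intro y
      rw [hS]
      simp only [mem_setOf_eq, mem_Ioo, abs_sub_lt_iff]
      constructor <;> rintro ⟨h1, h2⟩ <;> constructor <;> linarith
    have h1 : (fun y => F (y, s)) = (Ioo (x - a*s) (x + a*s)).indicator (fun _ => -deriv ψ s) := by
      funext y
      by_cases h : y ∈ Ioo (x - a*s) (x + a*s)
      · rw [hF, indicator_of_mem ((hmem y).mpr h), indicator_of_mem h]
      · rw [hF, indicator_of_notMem (fun hc => h ((hmem y).mp hc)), indicator_of_notMem h]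
    rw [h1, integral_indicator_const _ measurableSet_Ioo, smul_eq_mul, mul_comm, Measure.real_def]
  calc ∫ y, ψ ((x - y) / a) ∂μ = ∫ y, ∫ s, F (y, s) ∂ν ∂μ :=
        integral_congr_ae (Eventually.of_forall fun y => (step1 y).symm)
    _ = ∫ s, ∫ y, F (y, s) ∂μ ∂ν := integral_integral_swap (f := fun y s => F (y, s)) hFint
    _ = ∫ s in Ioi (0:ℝ), (-deriv ψ s) * (μ (Ioo (x - a*s) (x + a*s))).toReal :=
        setIntegral_congr_fun measurableSet_Ioi (fun s hs => step2 s hs)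

lemma aux_ibp {ψ : ℝ → ℝ} (hC1 : ContDiff ℝ 1 ψ) {α : ℝ} (hα0 : 0 < α)
    (htop2 : Tendsto (fun s => s ^ α * ψ s) atTop (𝓝 0))
    (hintA : IntegrableOn (fun s => s ^ (α-1) * ψ s) (Ioi 0))
    (hintB : IntegrableOn (fun s => s ^ (α-1) * (s * deriv ψ s)) (Ioi 0)) :
    ∫ s in Ioi (0:ℝ), α * 2 ^ α * s ^ (α-1) * ψ s =
      ∫ s in Ioi (0:ℝ), (-deriv ψ s) * (2*s) ^ α := by
  set u : ℝ → ℝ := fun s => -((2:ℝ) ^ α * (s ^ α * ψ s)) with hu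
  set u' : ℝ → ℝ := fun s => -((2:ℝ) ^ α * (α * s ^ (α-1) * ψ s + s ^ α * deriv ψ s)) with hu'
  have hpow : ∀ s : ℝ, 0 < s → s ^ (α-1) * s = s ^ α := by
    intro s hs
    have h := Real.rpow_add hs (α-1) 1
    rw [Real.rpow_one] at h
    rw [← h]
    congr 1
    ring
  have hderiv : ∀ s ∈ Ioi (0:ℝ), HasDerivAt u (u' s) s := by
    intro s hs
    have h1 : HasDerivAt (fun t : ℝ => t ^ α) (α * s ^ (α-1)) s :=
      Real.hasDerivAt_rpow_const (Or.inl (ne_of_gt hs))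
    have h2 : HasDerivAt ψ (deriv ψ s) s := ((hC1.differentiable one_ne_zero) s).hasDerivAt
    have h3 := (HasDerivAt.const_mul ((2:ℝ) ^ α) (h1.mul h2)).neg
    exact h3
  have hcont : ContinuousWithinAt u (Ici (0:ℝ)) 0 := by
    apply ContinuousAt.continuousWithinAt
    have h1 : ContinuousAt (fun s : ℝ => s ^ α) 0 :=
      Real.continuousAt_rpow_const 0 α (Or.inr hα0.le)
    exact ((h1.mul hC1.continuous.continuousAt).const_mul _).neg
  have htop : Tendsto u atTop (𝓝 0) := by
    simpa using (htop2.const_mul ((2:ℝ) ^ α)).neg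
  have hint' : IntegrableOn u' (Ioi (0:ℝ)) := by
    refine ((((hintA.const_mul α).add hintB).const_mul ((2:ℝ) ^ α)).neg.congr ?_)
    filter_upwards [ae_restrict_mem measurableSet_Ioi] with s hs
    have h1 : s ^ (α-1) * (s * deriv ψ s) = s ^ α * deriv ψ s := by
      rw [← mul_assoc, hpow s hs]
    show -((2:ℝ) ^ α * (α * (s ^ (α-1) * ψ s) + s ^ (α-1) * (s * deriv ψ s))) = u' s
    rw [h1, hu']
    ring
  have h0 : ∫ s in Ioi (0:ℝ), u' s = 0 - u 0 :=
    integral_Ioi_of_hasDerivAt_of_tendsto hcont hderiv hint' htop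
  have hu0 : u 0 = 0 := by
    rw [hu]
    simp [Real.zero_rpow (ne_of_gt hα0)]
  rw [hu0] at h0
  norm_num at h0
  have IA : IntegrableOn (fun s => α * 2 ^ α * s ^ (α-1) * ψ s) (Ioi (0:ℝ)) := by
    refine (hintA.const_mul (α * 2 ^ α)).congr (Eventually.of_forall fun s => ?_)
    ring
  have IB : IntegrableOn (fun s => (2:ℝ) ^ α * (s ^ α * deriv ψ s)) (Ioi (0:ℝ)) := by
    refine (hintB.const_mul ((2:ℝ) ^ α)).congr ?_
    filter_upwards [ae_restrict_mem measurableSet_Ioi] with s hs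
    rw [← mul_assoc (s ^ (α-1)), hpow s hs]
  have hsum : (∫ s in Ioi (0:ℝ), α * 2 ^ α * s ^ (α-1) * ψ s) +
      (∫ s in Ioi (0:ℝ), (2:ℝ) ^ α * (s ^ α * deriv ψ s)) = 0 := by
    rw [← integral_add IA IB]
    have : ∀ s : ℝ, α * 2 ^ α * s ^ (α-1) * ψ s + (2:ℝ) ^ α * (s ^ α * deriv ψ s) = -u' s := by
      intro s
      rw [hu']
      ring
    rw [integral_congr_ae (Eventually.of_forall fun s => this s), integral_neg, h0, neg_zero]
  have hfinal : ∫ s in Ioi (0:ℝ), (-deriv ψ s) * (2*s) ^ α =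
      ∫ s in Ioi (0:ℝ), -((2:ℝ) ^ α * (s ^ α * deriv ψ s)) := by
    refine setIntegral_congr_fun measurableSet_Ioi (fun s hs => ?_)
    have hs' : (0:ℝ) < s := hs
    rw [Real.mul_rpow (by norm_num) hs'.le]
    ring
  rw [hfinal, integral_neg]
  linarith

lemma aux_M {μ : Measure ℝ} [IsProbabilityMeasure μ] {x α L : ℝ} (hα0 : 0 < α)
    (hd : Tendsto (fun ε : ℝ => (μ (Ioo (x - ε) (x + ε))).toReal / (2 * ε) ^ α)
      (𝓝[>] 0) (𝓝 L)) :
    ∃ M : ℝ, 0 < M ∧ ∀ ε : ℝ, 0 < ε → ε ≤ 1 →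
      (μ (Ioo (x - ε) (x + ε))).toReal ≤ M * (2 * ε) ^ α := by
  have hev : ∀ᶠ ε in 𝓝[>] (0:ℝ),
      (μ (Ioo (x - ε) (x + ε))).toReal / (2 * ε) ^ α ≤ |L| + 1 :=
    hd.eventually_le_const (by have := abs_nonneg L; linarith [le_abs_self L])
  obtain ⟨ε₀, hε₀, hsub⟩ := mem_nhdsGT_iff_exists_Ioo_subset.mp hev
  have hε₀0 : (0:ℝ) < ε₀ := hε₀
  set e : ℝ := min (ε₀ / 2) 1 with he
  have he0 : 0 < e := lt_min (by linarith) one_pos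
  refine ⟨max (|L| + 1) ((2*e) ^ (-α)), lt_max_of_lt_left (by positivity), fun ε hε hε1 => ?_⟩
  have h2ε : (0:ℝ) < (2*ε) ^ α := Real.rpow_pos_of_pos (by linarith) α
  rcases lt_or_ge ε ε₀ with hlt | hge
  · have := hsub ⟨hε, hlt⟩
    have h1 : (μ (Ioo (x - ε) (x + ε))).toReal ≤ (|L| + 1) * (2*ε) ^ α :=
      (div_le_iff₀ h2ε).mp this
    exact h1.trans (mul_le_mul_of_nonneg_right (le_max_left _ _) h2ε.le)
  · have hF1 : (μ (Ioo (x - ε) (x + ε))).toReal ≤ 1 := by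
      have h := prob_le_one (μ := μ) (s := Ioo (x - ε) (x + ε))
      have := ENNReal.toReal_mono ENNReal.one_ne_top h
      simpa using this
    have heε : e ≤ ε := le_trans (min_le_left _ _) (by linarith)
    have h1 : (1:ℝ) ≤ (2*e) ^ (-α) * (2*ε) ^ α := by
      have h2 : (2*e) ^ α ≤ (2*ε) ^ α :=
        Real.rpow_le_rpow (by positivity) (by linarith) hα0.le
      have h3 : (0:ℝ) < (2*e) ^ α := Real.rpow_pos_of_pos (by positivity) α
      rw [Real.rpow_neg (by positivity), inv_mul_eq_div, le_div_iff₀ h3, one_mul]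
      exact h2
    calc (μ (Ioo (x - ε) (x + ε))).toReal ≤ 1 := hF1
      _ ≤ (2*e) ^ (-α) * (2*ε) ^ α := h1
      _ ≤ max (|L| + 1) ((2*e) ^ (-α)) * (2*ε) ^ α :=
        mul_le_mul_of_nonneg_right (le_max_right _ _) h2ε.le

lemma aux_dom {F : ℝ → ℝ} {α M : ℝ} (hα0 : 0 < α) (hM0 : 0 ≤ M)
    (hF0 : ∀ ε, 0 ≤ F ε) (hF1 : ∀ ε, F ε ≤ 1)
    (hM : ∀ ε : ℝ, 0 < ε → ε ≤ 1 → F ε ≤ M * (2*ε) ^ α)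
    {a s : ℝ} (ha : 0 < a) (hs : 0 < s) :
    a ^ (-α) * F (a*s) ≤ M * (2*s) ^ α + s ^ α := by
  have hanegα : (0:ℝ) < a ^ (-α) := Real.rpow_pos_of_pos ha _
  have hsα : (0:ℝ) ≤ s ^ α := Real.rpow_nonneg hs.le α
  have h2sα : (0:ℝ) ≤ (2*s) ^ α := Real.rpow_nonneg (by linarith) α
  rcases le_or_gt (a*s) 1 with hle | hgt
  · have h1 : F (a*s) ≤ M * (2*(a*s)) ^ α := hM _ (mul_pos ha hs) hle
    have h2 : (2*(a*s) : ℝ) = a * (2*s) := by ring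
    rw [h2, Real.mul_rpow ha.le (by linarith)] at h1
    have h3 : a ^ (-α) * F (a*s) ≤ a ^ (-α) * (M * (a ^ α * (2*s) ^ α)) :=
      mul_le_mul_of_nonneg_left h1 hanegα.le
    have h4 : a ^ (-α) * (M * (a ^ α * (2*s) ^ α)) = M * (2*s) ^ α := by
      rw [Real.rpow_neg ha.le]
      have : (0:ℝ) < a ^ α := Real.rpow_pos_of_pos ha α
      field_simp
    nlinarith [h3, h4]
  · have h1 : a ^ (-α) * F (a*s) ≤ a ^ (-α) * 1 :=
      mul_le_mul_of_nonneg_left (hF1 _) hanegα.le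
    have h2 : a⁻¹ < s := by
      rw [inv_eq_one_div, div_lt_iff₀ ha]
      nlinarith
    have h3 : a ^ (-α) ≤ s ^ α := by
      rw [Real.rpow_neg ha.le, ← Real.inv_rpow ha.le]
      exact Real.rpow_le_rpow (by positivity) h2.le hα0.le
    nlinarith [mul_nonneg hM0 h2sα]

/-- Theorem 2.2 (3): if the `α`-derivative `(d_α μ)(x)` exists and is finite, then
`a^{-α} (ψ_a * μ)(x) → c_α (d_α μ)(x)` as `a → 0⁺`, where
`c_α = ∫_0^∞ α 2^α y^{α-1} ψ(y) dy`. -/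
theorem psi_a_conv_alpha_derivative
    (ψ : ℝ → ℝ) (hC1 : ContDiff ℝ 1 ψ) (hψ0 : ψ 0 = 1)
    (heven : ∀ x : ℝ, ψ (-x) = ψ x)
    (hdecay : ∃ C > (0:ℝ), ∃ δ > (1:ℝ), ∀ x : ℝ,
      |ψ x| + |x * deriv ψ x| ≤ C * (1 + x ^ 2) ^ (-δ / 2))
    (μ : Measure ℝ) [IsProbabilityMeasure μ]
    (α : ℝ) (hα0 : 0 < α) (hα1 : α ≤ 1) (x : ℝ) (L : ℝ)
    (hd : Tendsto (fun ε : ℝ => (μ (Ioo (x - ε) (x + ε))).toReal / (2 * ε) ^ α)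
      (𝓝[>] 0) (𝓝 L)) :
    Tendsto (fun a : ℝ => a ^ (-α) * ∫ y : ℝ, ψ ((x - y) / a) ∂μ)
      (𝓝[>] 0)
      (𝓝 ((∫ y in Ioi (0:ℝ), α * 2 ^ α * y ^ (α - 1) * ψ y) * L)) := by
  obtain ⟨C, hC, δ, hδ, hb⟩ := hdecay
  have hδ0 : (0:ℝ) < δ := by linarith
  have hψc : Continuous ψ := hC1.continuous
  have hdc : Continuous (deriv ψ) := hC1.continuous_deriv le_rfl
  have hψle : ∀ s, |ψ s| ≤ C * (1 + s ^ 2) ^ (-δ/2) := fun s =>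
    le_trans (le_add_of_nonneg_right (abs_nonneg _)) (hb s)
  have hsdle : ∀ s, |s * deriv ψ s| ≤ C * (1 + s ^ 2) ^ (-δ/2) := fun s =>
    le_trans (le_add_of_nonneg_left (abs_nonneg _)) (hb s)
  have htailψ : ∀ s : ℝ, 1 ≤ s → |ψ s| ≤ C * s ^ (-δ) := fun s hs =>
    (hψle s).trans (mul_le_mul_of_nonneg_left (aux_one_plus_sq hδ0 hs) hC.le)
  have htailsd : ∀ s : ℝ, 1 ≤ s → |s * deriv ψ s| ≤ C * s ^ (-δ) := fun s hs =>
    (hsdle s).trans (mul_le_mul_of_nonneg_left (aux_one_plus_sq hδ0 hs) hC.le)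
  have htaild : ∀ s : ℝ, 1 ≤ s → |deriv ψ s| ≤ C * s ^ (-δ) := by
    intro s hs
    refine le_trans ?_ (htailsd s hs)
    rw [abs_mul, abs_of_nonneg (by linarith : (0:ℝ) ≤ s)]
    nlinarith [abs_nonneg (deriv ψ s)]
  have hint0 : IntegrableOn (deriv ψ) (Ioi (0:ℝ)) := by
    refine (aux_int hdc hδ htaild (β := 0) (by norm_num) le_rfl).congr
      (Eventually.of_forall fun s => ?_)
    simp [Real.rpow_zero]
  have hintA : IntegrableOn (fun s => s ^ (α-1) * ψ s) (Ioi (0:ℝ)) :=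
    aux_int hψc hδ htailψ (by linarith) (by linarith)
  have hintB : IntegrableOn (fun s => s ^ (α-1) * (s * deriv ψ s)) (Ioi (0:ℝ)) :=
    aux_int (continuous_id.mul hdc) hδ htailsd (by linarith) (by linarith)
  have htopψ := aux_top hC hδ htailψ
  have htop2 := aux_top2 hC hδ hα0 hα1 htailψ
  have hrep : ∀ u : ℝ, 0 ≤ u → ∫ s in Ioi u, -deriv ψ s = ψ u := fun u hu =>
    aux_rep hC1 htopψ hint0 hu
  have hibp := aux_ibp hC1 hα0 htop2 hintA hintB
  obtain ⟨M, hM0, hM⟩ := aux_M hα0 hd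
  have hpow : ∀ s : ℝ, 0 < s → s ^ (α-1) * s = s ^ α := by
    intro s hs
    have h := Real.rpow_add hs (α-1) 1
    rw [Real.rpow_one] at h
    rw [← h]
    congr 1
    ring
  set Φ : ℝ → ℝ → ℝ := fun a s =>
    (-deriv ψ s) * (a ^ (-α) * (μ (Ioo (x - a*s) (x + a*s))).toReal) with hΦ
  have hF0 : ∀ ε : ℝ, 0 ≤ (μ (Ioo (x - ε) (x + ε))).toReal := fun ε => ENNReal.toReal_nonneg
  have hF1 : ∀ ε : ℝ, (μ (Ioo (x - ε) (x + ε))).toReal ≤ 1 := by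
    intro ε
    have h := prob_le_one (μ := μ) (s := Ioo (x - ε) (x + ε))
    have := ENNReal.toReal_mono ENNReal.one_ne_top h
    simpa using this
  have hDCT : Tendsto (fun a => ∫ s in Ioi (0:ℝ), Φ a s) (𝓝[>] (0:ℝ))
      (𝓝 (∫ s in Ioi (0:ℝ), (-deriv ψ s) * ((2*s) ^ α * L))) := by
    refine tendsto_integral_filter_of_dominated_convergence
      (fun s => |deriv ψ s| * (M * (2*s) ^ α + s ^ α)) ?_ ?_ ?_ ?_
    · filter_upwards [self_mem_nhdsWithin] with a ha
      have ha' : (0:ℝ) < a := ha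
      have hmono : Monotone (fun s : ℝ => (μ (Ioo (x - a*s) (x + a*s))).toReal) := by
        intro s t hst
        refine ENNReal.toReal_mono (measure_ne_top μ _) (measure_mono (Ioo_subset_Ioo ?_ ?_)) <;>
          nlinarith
      exact ((hdc.measurable.neg).mul
        (measurable_const.mul hmono.measurable)).aestronglyMeasurable
    · filter_upwards [self_mem_nhdsWithin] with a ha
      have ha' : (0:ℝ) < a := ha
      filter_upwards [ae_restrict_mem measurableSet_Ioi] with s hs
      have hs' : (0:ℝ) < s := hs
      have hnn : 0 ≤ a ^ (-α) * (μ (Ioo (x - a*s) (x + a*s))).toReal :=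
        mul_nonneg (Real.rpow_nonneg ha'.le _) (hF0 _)
      have h1 : ‖Φ a s‖ =
          |deriv ψ s| * (a ^ (-α) * (μ (Ioo (x - a*s) (x + a*s))).toReal) := by
        rw [hΦ]
        dsimp only
        rw [Real.norm_eq_abs, abs_mul, abs_neg, abs_of_nonneg hnn]
      rw [h1]
      refine mul_le_mul_of_nonneg_left ?_ (abs_nonneg _)
      exact aux_dom (F := fun ε => (μ (Ioo (x - ε) (x + ε))).toReal) hα0 hM0.le hF0 hF1 hM ha' hs'
    · refine (hintB.norm.const_mul (M * 2 ^ α + 1)).congr ?_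
      filter_upwards [ae_restrict_mem measurableSet_Ioi] with s hs
      have hs' : (0:ℝ) < s := hs
      have h1 : ‖s ^ (α-1) * (s * deriv ψ s)‖ = s ^ α * |deriv ψ s| := by
        rw [Real.norm_eq_abs, abs_mul, abs_mul, abs_of_nonneg (Real.rpow_nonneg hs'.le _),
          abs_of_pos hs', ← mul_assoc, hpow s hs']
      rw [h1, Real.mul_rpow (by norm_num) hs'.le]
      ring
    · filter_upwards [ae_restrict_mem measurableSet_Ioi] with s hs
      have hs' : (0:ℝ) < s := hs
      have hcomp : Tendsto (fun a : ℝ => a * s) (𝓝[>] (0:ℝ)) (𝓝[>] (0:ℝ)) := by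
        refine tendsto_nhdsWithin_of_tendsto_nhds_of_eventually_within _ ?_ ?_
        · have h : Tendsto (fun a : ℝ => a * s) (𝓝 (0:ℝ)) (𝓝 ((0:ℝ) * s)) :=
            (tendsto_id (α := ℝ) (x := 𝓝 (0:ℝ))).mul_const s
          rw [zero_mul] at h
          exact h.mono_left nhdsWithin_le_nhds
        · filter_upwards [self_mem_nhdsWithin] with a ha
          exact mul_pos ha hs'
      have h1 : Tendsto (fun a : ℝ =>
          (μ (Ioo (x - a*s) (x + a*s))).toReal / (2*(a*s)) ^ α) (𝓝[>] (0:ℝ)) (𝓝 L) :=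
        hd.comp hcomp
      have h2 := (h1.mul_const ((2*s) ^ α)).const_mul (-deriv ψ s)
      have heq : ∀ᶠ a in 𝓝[>] (0:ℝ),
          (-deriv ψ s) * ((μ (Ioo (x - a*s) (x + a*s))).toReal / (2*(a*s)) ^ α * (2*s) ^ α)
            = Φ a s := by
        filter_upwards [self_mem_nhdsWithin] with a ha
        have ha' : (0:ℝ) < a := ha
        have h3 : (2*(a*s) : ℝ) = a * (2*s) := by ring
        rw [hΦ]
        dsimp only
        rw [h3, Real.mul_rpow ha'.le (by linarith), Real.rpow_neg ha'.le]
        have h4 : (0:ℝ) < (2*s) ^ α := Real.rpow_pos_of_pos (by linarith) α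
        have h5 : (0:ℝ) < a ^ α := Real.rpow_pos_of_pos ha' α
        field_simp
      have h6 := Tendsto.congr' heq h2
      have h7 : (-deriv ψ s) * (L * (2*s) ^ α) = (-deriv ψ s) * ((2*s) ^ α * L) := by ring
      rwa [h7] at h6
  have heq : ∀ᶠ a in 𝓝[>] (0:ℝ),
      ∫ s in Ioi (0:ℝ), Φ a s = a ^ (-α) * ∫ y : ℝ, ψ ((x - y) / a) ∂μ := by
    filter_upwards [self_mem_nhdsWithin] with a ha
    have ha' : (0:ℝ) < a := ha
    rw [key_repr hdc hrep hint0 heven μ x a ha', ← integral_const_mul]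
    refine integral_congr_ae (Eventually.of_forall fun s => ?_)
    rw [hΦ]
    dsimp only
    ring
  have hL : ∫ s in Ioi (0:ℝ), (-deriv ψ s) * ((2*s) ^ α * L)
      = (∫ y in Ioi (0:ℝ), α * 2 ^ α * y ^ (α-1) * ψ y) * L := by
    have h1 : ∀ s : ℝ, (-deriv ψ s) * ((2*s) ^ α * L) = ((-deriv ψ s) * (2*s) ^ α) * L :=
      fun s => by ring
    rw [integral_congr_ae (Eventually.of_forall h1), integral_mul_const, hibp]
  have hfinal := Tendsto.congr' heq hDCT
  rwa [hL] at hfinal
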